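/- Let N be a binary phylogenetic network such that for every reticulation r, either (i) both parents of r are tree-vertices, or (ii) one parent of r is a tree-vertex and the sibling of r under that tree-vertex parent is a tree-vertex or a leaf. Then N is tree-based. -/

import Mathlib

/-- Out-degree of `v` in the digraph with arc relation `arc`. -/
def outdeg {V : Type} [Fintype V] [DecidableEq V] (arc : V → V → Bool) (v : V) : ℕ :=
  (Finset.univ.filter fun w => arc v w = true).card

/-- In-degree of `v` in the digraph with arc relation `arc`. -/
def indeg {V : Type} [Fintype V] [DecidableEq V] (arc : V → V → Bool) (v : V) : ℕ :=
  (Finset.univ.filter fun u => arc u v = true).card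

/-- A rooted binary phylogenetic network on the finite vertex type `V`:
a directed acyclic graph with a single root of indegree 0 and outdegree 1 or 2,
all other vertices being leaves (indegree 1, outdegree 0),
reticulations (indegree 2, outdegree 1) or tree-vertices (indegree 1, outdegree 2). -/
structure BinNet (V : Type) [Fintype V] [DecidableEq V] where
  arc : V → V → Bool
  root : V
  acyclic : ∀ v, ¬ Relation.TransGen (fun a b => arc a b = true) v v
  root_indeg : indeg arc root = 0
  root_outdeg : outdeg arc root = 1 ∨ outdeg arc root = 2
  vertex_types : ∀ v, v ≠ root →
    (indeg arc v = 1 ∧ outdeg arc v = 0) ∨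
    (indeg arc v = 2 ∧ outdeg arc v = 1) ∨
    (indeg arc v = 1 ∧ outdeg arc v = 2)

variable {V : Type} [Fintype V] [DecidableEq V]

/-- A leaf of the network. -/
def BinNet.IsLeaf (N : BinNet V) (v : V) : Prop := outdeg N.arc v = 0

/-- A reticulation of the network. -/
def BinNet.IsRetic (N : BinNet V) (v : V) : Prop := indeg N.arc v = 2

/-- A tree-vertex of the network. -/
def BinNet.IsTreeVertex (N : BinNet V) (v : V) : Prop :=
  v ≠ N.root ∧ indeg N.arc v = 1 ∧ outdeg N.arc v = 2

/-- An omnian: a non-leaf vertex all of whose children are reticulations. -/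
def BinNet.IsOmnian (N : BinNet V) (v : V) : Prop :=
  outdeg N.arc v ≠ 0 ∧ ∀ w, N.arc v w = true → N.IsRetic w

/-- `T` is a rooted spanning tree of `N` (using a subset of the arcs of `N`,
every non-root vertex having exactly one incoming tree arc). -/
def BinNet.IsSpanningTree (N : BinNet V) (T : V → V → Bool) : Prop :=
  (∀ u v, T u v = true → N.arc u v = true) ∧
  (∀ u, T u N.root = false) ∧
  (∀ v, v ≠ N.root → indeg T v = 1)

/-- `N` is tree-based: it has a rooted spanning tree without dummy leaves,
i.e. every leaf of the spanning tree is a leaf of `N`. -/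
def BinNet.TreeBased (N : BinNet V) : Prop :=
  ∃ T, N.IsSpanningTree T ∧ ∀ v, outdeg T v = 0 → outdeg N.arc v = 0

/-- In a finset of cardinality two, two elements that both differ from a third
element of the set must be equal. -/
private lemma two_mem_aux {S : Finset V} (hS : S.card = 2) {a b c : V}
    (ha : a ∈ S) (hb : b ∈ S) (hc : c ∈ S) (hba : b ≠ a) (hca : c ≠ a) : b = c := by
  have hab : ({a, b} : Finset V) ⊆ S := by
    intro x hx
    rcases Finset.mem_insert.mp hx with rfl | hx
    · exact ha
    · rw [Finset.mem_singleton.mp hx]; exact hb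
  have h2 : ({a, b} : Finset V).card = 2 := Finset.card_pair (Ne.symm hba)
  have hSeq : ({a, b} : Finset V) = S :=
    Finset.eq_of_subset_of_card_le hab (by rw [hS, h2])
  rw [← hSeq] at hc
  rcases Finset.mem_insert.mp hc with rfl | hc
  · exact absurd rfl hca
  · exact (Finset.mem_singleton.mp hc).symm

/-- If for every reticulation `r` of a binary phylogenetic network `N`
either (i) both parents of `r` are tree-vertices, or (ii) one parent of `r` is a
tree-vertex such that the sibling of `r` under that parent is a tree-vertex or a leaf,
then `N` is tree-based. -/
theorem stmt_8 {V : Type} [Fintype V] [DecidableEq V] (N : BinNet V)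
    (h : ∀ r, N.IsRetic r →
      (∀ p, N.arc p r = true → N.IsTreeVertex p) ∨
      (∃ p, N.arc p r = true ∧ N.IsTreeVertex p ∧
        ∀ s, N.arc p s = true → s ≠ r → (N.IsTreeVertex s ∨ N.IsLeaf s))) :
    N.TreeBased := by
  classical
  -- no arc points into the root
  have hroot_no : ∀ u, N.arc u N.root = false := by
    intro u
    cases hq : N.arc u N.root with
    | false => rfl
    | true =>
      exfalso
      have hmem : u ∈ Finset.univ.filter fun u => N.arc u N.root = true := by simp [hq]
      have hemp : (Finset.univ.filter fun u => N.arc u N.root = true) = ∅ :=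
        Finset.card_eq_zero.mp N.root_indeg
      rw [hemp] at hmem
      exact Finset.notMem_empty u hmem
  have hretic_ne_root : ∀ r, N.IsRetic r → r ≠ N.root := by
    intro r hr hrr
    rw [BinNet.IsRetic, hrr, N.root_indeg] at hr
    omega
  have hretic_out : ∀ r, N.IsRetic r → outdeg N.arc r = 1 := by
    intro r hr
    rw [BinNet.IsRetic] at hr
    rcases N.vertex_types r (hretic_ne_root r hr) with ⟨h1, _⟩ | ⟨_, h2⟩ | ⟨h1, _⟩
    · omega
    · exact h2
    · omega
  have hretic_par : ∀ r, N.IsRetic r → ∃ p, N.arc p r = true := by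
    intro r hr
    rw [BinNet.IsRetic] at hr
    have hc : (Finset.univ.filter fun u => N.arc u r = true).card = 2 := hr
    have hpos : 0 < (Finset.univ.filter fun u => N.arc u r = true).card := by omega
    obtain ⟨p, hp⟩ := Finset.card_pos.mp hpos
    exact ⟨p, (Finset.mem_filter.mp hp).2⟩
  have htree_par : ∀ r, N.IsRetic r → ∃ p, N.arc p r = true ∧ N.IsTreeVertex p := by
    intro r hr
    rcases h r hr with hall | ⟨p, hp, hpt, _⟩
    · obtain ⟨p, hp⟩ := hretic_par r hr
      exact ⟨p, hp, hall p hp⟩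
    · exact ⟨p, hp, hpt⟩
  -- a reticulation has at most one non-tree-vertex parent
  have huniq : ∀ r, N.IsRetic r → ∀ p q, N.arc p r = true → ¬N.IsTreeVertex p →
      N.arc q r = true → ¬N.IsTreeVertex q → p = q := by
    intro r hr p q hp hpt hq hqt
    obtain ⟨t0, ht0, ht0t⟩ := htree_par r hr
    have hcard : (Finset.univ.filter fun u => N.arc u r = true).card = 2 := hr
    refine two_mem_aux hcard (a := t0) (by simp [ht0]) (by simp [hp]) (by simp [hq]) ?_ ?_
    · rintro rfl; exact hpt ht0t
    · rintro rfl; exact hqt ht0t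
  -- children of a tree omnian have no non-tree-vertex parent
  have homnian_child : ∀ v, N.IsTreeVertex v → (∀ w, N.arc v w = true → N.IsRetic w) →
      ∀ r q, N.arc v r = true → N.arc q r = true → ¬N.IsTreeVertex q → False := by
    intro v hv hvo r q hvr hqr hqt
    have hrret : N.IsRetic r := hvo r hvr
    rcases h r hrret with hall | ⟨p, hpr, hpt, hsib⟩
    · exact hqt (hall q hqr)
    · have hcard : (Finset.univ.filter fun u => N.arc u r = true).card = 2 := hrret
      have hpv : p = v := two_mem_aux hcard (a := q)
        (by simp [hqr]) (by simp [hpr]) (by simp [hvr])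
        (by rintro rfl; exact hqt hpt) (by rintro rfl; exact hqt hv)
      subst hpv
      have hout : (Finset.univ.filter fun w => N.arc p w = true).card = 2 := hv.2.2
      have h1lt : 1 < (Finset.univ.filter fun w => N.arc p w = true).card := by omega
      obtain ⟨s, hs, hsr⟩ := Finset.exists_mem_ne h1lt r
      have hsarc : N.arc p s = true := (Finset.mem_filter.mp hs).2
      have hsret : N.IsRetic s := hvo s hsarc
      rw [BinNet.IsRetic] at hsret
      rcases hsib s hsarc hsr with hst | hsl
      · have := hst.2.1; omega
      · rw [BinNet.IsLeaf] at hsl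
        have := hretic_out s hsret
        omega
  -- the set of tree omnians
  set A : Finset V := Finset.univ.filter
      (fun v => N.IsTreeVertex v ∧ ∀ w, N.arc v w = true → N.IsRetic w) with hA
  set tch : {x // x ∈ A} → Finset V :=
      (fun a => Finset.univ.filter fun w => N.arc a.1 w = true) with htch
  -- Hall's condition for the bipartite graph (tree omnians, reticulation children)
  have hall : ∀ s : Finset {x // x ∈ A}, s.card ≤ (s.biUnion tch).card := by
    intro s
    have key := Finset.card_mul_le_card_mul
      (fun (a : {x // x ∈ A}) (c : V) => N.arc a.1 c = true)
      (s := s) (t := s.biUnion tch) (m := 2) (n := 2)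
      (fun a ha => by
        have hsub : tch a ⊆ (s.biUnion tch).bipartiteAbove
            (fun (a : {x // x ∈ A}) (c : V) => N.arc a.1 c = true) a := by
          intro c hc
          rw [Finset.mem_bipartiteAbove]
          exact ⟨Finset.mem_biUnion.mpr ⟨a, ha, hc⟩, (Finset.mem_filter.mp hc).2⟩
        have h2 : (tch a).card = 2 := (Finset.mem_filter.mp a.2).2.1.2.2
        calc 2 = (tch a).card := h2.symm
          _ ≤ _ := Finset.card_le_card hsub)
      (fun c hc => by
        obtain ⟨a0, ha0s, hc0⟩ := Finset.mem_biUnion.mp hc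
        have hcret : N.IsRetic c :=
          (Finset.mem_filter.mp a0.2).2.2 c (Finset.mem_filter.mp hc0).2
        have hle : (s.bipartiteBelow
            (fun (a : {x // x ∈ A}) (c : V) => N.arc a.1 c = true) c).card
            ≤ (Finset.univ.filter fun u => N.arc u c = true).card := by
          apply Finset.card_le_card_of_injOn (fun a => a.1)
          · intro a ha
            rw [Finset.mem_coe, Finset.mem_bipartiteBelow] at ha
            simp [ha.2]
          · intro x _ y _ hxy
            exact Subtype.ext hxy
        have hc2 : (Finset.univ.filter fun u => N.arc u c = true).card = 2 := hcret
        omega)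
    omega
  obtain ⟨f, hfinj, hfmem⟩ := (Finset.all_card_le_biUnion_card_iff_exists_injective tch).mp hall
  -- the chosen parent of each reticulation
  set choice : V → V := (fun r =>
    if h1 : ∃ p, N.arc p r = true ∧ ¬ N.IsTreeVertex p then h1.choose
    else if h2 : ∃ a : {x // x ∈ A}, f a = r then (h2.choose).1
    else if h3 : ∃ p, N.arc p r = true then h3.choose else r) with hchoice
  have hchoice_arc : ∀ r, N.IsRetic r → N.arc (choice r) r = true := by
    intro r hr
    simp only [hchoice]
    split_ifs with h1 h2 h3
    · exact h1.choose_spec.1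
    · have hm := (Finset.mem_filter.mp (hfmem h2.choose)).2
      rw [h2.choose_spec] at hm
      exact hm
    · exact h3.choose_spec
    · exact absurd (hretic_par r hr) h3
  have hchoice_nontree : ∀ r p, N.IsRetic r → N.arc p r = true → ¬N.IsTreeVertex p →
      choice r = p := by
    intro r p hr hp hpt
    have h1 : ∃ q, N.arc q r = true ∧ ¬ N.IsTreeVertex q := ⟨p, hp, hpt⟩
    simp only [hchoice]
    rw [dif_pos h1]
    exact huniq r hr _ p h1.choose_spec.1 h1.choose_spec.2 hp hpt
  have hchoice_match : ∀ (a : {x // x ∈ A}), choice (f a) = a.1 := by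
    intro a
    have haA := Finset.mem_filter.mp a.2
    have harc : N.arc a.1 (f a) = true := (Finset.mem_filter.mp (hfmem a)).2
    have h1 : ¬ ∃ p, N.arc p (f a) = true ∧ ¬ N.IsTreeVertex p := by
      rintro ⟨q, hq, hqt⟩
      exact homnian_child a.1 haA.2.1 haA.2.2 (f a) q harc hq hqt
    have h2 : ∃ b : {x // x ∈ A}, f b = f a := ⟨a, rfl⟩
    simp only [hchoice]
    rw [dif_neg h1, dif_pos h2]
    exact congrArg Subtype.val (hfinj h2.choose_spec)
  -- the spanning tree
  set T : V → V → Bool :=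
      (fun u v => N.arc u v && (decide (¬ N.IsRetic v) || decide (u = choice v))) with hTdef
  have hT : ∀ u v, T u v = true ↔ (N.arc u v = true ∧ (N.IsRetic v → u = choice v)) := by
    intro u v
    rw [hTdef]
    simp only [Bool.and_eq_true, Bool.or_eq_true, decide_eq_true_eq]
    tauto
  refine ⟨T, ⟨fun u v hT' => ((hT u v).mp hT').1, ?_, ?_⟩, ?_⟩
  · intro u
    cases hq : T u N.root with
    | false => rfl
    | true =>
      exfalso
      have := ((hT u N.root).mp hq).1
      rw [hroot_no u] at this
      exact Bool.false_ne_true this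
  · intro v hv
    by_cases hvr : N.IsRetic v
    · have heq : (Finset.univ.filter fun u => T u v = true) = {choice v} := by
        ext u
        simp only [Finset.mem_filter, Finset.mem_univ, true_and, Finset.mem_singleton, hT]
        constructor
        · rintro ⟨_, h2⟩; exact h2 hvr
        · rintro rfl; exact ⟨hchoice_arc v hvr, fun _ => rfl⟩
      show (Finset.univ.filter fun u => T u v = true).card = 1
      rw [heq, Finset.card_singleton]
    · have heq : (Finset.univ.filter fun u => T u v = true)
          = (Finset.univ.filter fun u => N.arc u v = true) := by
        ext u
        simp only [Finset.mem_filter, Finset.mem_univ, true_and, hT]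
        exact ⟨fun h' => h'.1, fun h' => ⟨h', fun hr => absurd hr hvr⟩⟩
      show (Finset.univ.filter fun u => T u v = true).card = 1
      rw [heq]
      rcases N.vertex_types v hv with ⟨h1, _⟩ | ⟨h1, _⟩ | ⟨h1, _⟩
      · exact h1
      · exact absurd h1 hvr
      · exact h1
  · intro v hv
    by_contra hnv
    have hw : ∃ w, T v w = true := by
      by_cases hom : ∀ w, N.arc v w = true → N.IsRetic w
      · by_cases hvt : N.IsTreeVertex v
        · have hvA : v ∈ A := by
            rw [hA]
            exact Finset.mem_filter.mpr ⟨Finset.mem_univ v, hvt, hom⟩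
          refine ⟨f ⟨v, hvA⟩, (hT v (f ⟨v, hvA⟩)).mpr
            ⟨(Finset.mem_filter.mp (hfmem ⟨v, hvA⟩)).2,
             fun _ => (hchoice_match ⟨v, hvA⟩).symm⟩⟩
        · have hpos : (Finset.univ.filter fun w => N.arc v w = true).Nonempty :=
            Finset.card_pos.mp (Nat.pos_of_ne_zero hnv)
          obtain ⟨r, hrmem⟩ := hpos
          have hvr : N.arc v r = true := (Finset.mem_filter.mp hrmem).2
          have hrret := hom r hvr
          exact ⟨r, (hT v r).mpr ⟨hvr, fun _ => (hchoice_nontree r v hrret hvr hvt).symm⟩⟩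
      · push_neg at hom
        obtain ⟨w, hw1, hw2⟩ := hom
        exact ⟨w, (hT v w).mpr ⟨hw1, fun hr => absurd hr hw2⟩⟩
    obtain ⟨w, hw⟩ := hw
    have hmem : w ∈ Finset.univ.filter fun w => T v w = true := by simp [hw]
    have hemp : (Finset.univ.filter fun w => T v w = true) = ∅ :=
      Finset.card_eq_zero.mp hv
    rw [hemp] at hmem
    exact Finset.notMem_empty w hmem
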